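/- Let R be a po-ring and let A be a finitely generated partially ordered right R-module. Then A is finitely po-presented if and only if A is finitely po-presented at every spanning row matrix of A. -/

import Mathlib

/-- A *po-ring*: a ring equipped with a partial order such that addition is
translation-invariant, multiplication by nonnegative elements (on either side) is monotone,
the ring is directed (every element is a difference of two nonnegative elements),
and `0 ≤ 1`. -/
class PORing (R : Type*) extends Ring R, PartialOrder R where
  add_le_add_right' : ∀ a b : R, a ≤ b → ∀ c : R, a + c ≤ b + c
  mul_le_mul_of_nonneg_right' : ∀ a b c : R, a ≤ b → 0 ≤ c → a * c ≤ b * c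
  mul_le_mul_of_nonneg_left' : ∀ a b c : R, a ≤ b → 0 ≤ c → c * a ≤ c * b
  directed' : ∀ x : R, ∃ y z : R, 0 ≤ y ∧ 0 ≤ z ∧ x = y - z
  zero_le_one' : (0 : R) ≤ 1

/-- A *partially ordered right module* over a po-ring `R`: an additive abelian group with a
right `R`-action `rsmul` (written on the right, so `rsmul a ξ` is `aξ`), with the usual
right-module axioms, such that addition is translation-invariant and
`0 ≤ a`, `0 ≤ ξ` imply `0 ≤ aξ`. -/
class PORightModule (R : Type*) [PORing R] (A : Type*) [AddCommGroup A] [PartialOrder A] where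
  rsmul : A → R → A
  add_rsmul : ∀ (a b : A) (r : R), rsmul (a + b) r = rsmul a r + rsmul b r
  rsmul_add : ∀ (a : A) (r s : R), rsmul a (r + s) = rsmul a r + rsmul a s
  rsmul_mul : ∀ (a : A) (r s : R), rsmul a (r * s) = rsmul (rsmul a r) s
  rsmul_one : ∀ a : A, rsmul a 1 = a
  add_le_add_right' : ∀ a b : A, a ≤ b → ∀ c : A, a + c ≤ b + c
  rsmul_nonneg : ∀ (a : A) (r : R), 0 ≤ a → 0 ≤ r → 0 ≤ rsmul a r

open PORightModule

/-- A po-ring is a partially ordered right module over itself. -/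
instance PORing.toPORightModule (R : Type*) [PORing R] : PORightModule R R where
  rsmul := (· * ·)
  add_rsmul := add_mul
  rsmul_add := mul_add
  rsmul_mul a r s := (mul_assoc a r s).symm
  rsmul_one := mul_one
  add_le_add_right' := PORing.add_le_add_right'
  rsmul_nonneg a r ha hr := by
    have h := PORing.mul_le_mul_of_nonneg_right' 0 a r ha hr
    simpa using h

/-- Products of partially ordered right modules, ordered coordinatewise. -/
instance Pi.instPORightModule {R : Type*} [PORing R] {ι : Type*} {A : ι → Type*}
    [∀ i, AddCommGroup (A i)] [∀ i, PartialOrder (A i)] [∀ i, PORightModule R (A i)] :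
    PORightModule R (∀ i, A i) where
  rsmul x r i := rsmul (x i) r
  add_rsmul a b r := funext fun i => add_rsmul (a i) (b i) r
  rsmul_add a r s := funext fun i => rsmul_add (a i) r s
  rsmul_mul a r s := funext fun i => rsmul_mul (a i) r s
  rsmul_one a := funext fun i => rsmul_one (a i)
  add_le_add_right' a b h c := by
    intro i
    exact PORightModule.add_le_add_right' R (a i) (b i) (h i) (c i)
  rsmul_nonneg a r ha hr := by
    intro i
    exact PORightModule.rsmul_nonneg (a i) r (ha i) hr

/-- Binary products of partially ordered right modules, ordered coordinatewise. -/
instance Prod.instPORightModule {R : Type*} [PORing R] {A B : Type*}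
    [AddCommGroup A] [PartialOrder A] [PORightModule R A]
    [AddCommGroup B] [PartialOrder B] [PORightModule R B] :
    PORightModule R (A × B) where
  rsmul x r := (rsmul x.1 r, rsmul x.2 r)
  add_rsmul a b r := by
    refine Prod.ext ?_ ?_ <;> simp [PORightModule.add_rsmul]
  rsmul_add a r s := by
    refine Prod.ext ?_ ?_ <;> simp [PORightModule.rsmul_add]
  rsmul_mul a r s := by
    refine Prod.ext ?_ ?_ <;> simp [PORightModule.rsmul_mul]
  rsmul_one a := by
    refine Prod.ext ?_ ?_ <;> simp [PORightModule.rsmul_one]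
  add_le_add_right' a b h c := by
    rw [Prod.le_def] at h ⊢
    constructor
    · simpa using PORightModule.add_le_add_right' R a.1 b.1 h.1 c.1
    · simpa using PORightModule.add_le_add_right' R a.2 b.2 h.2 c.2
  rsmul_nonneg a r ha hr := by
    rw [Prod.le_def] at ha ⊢
    constructor
    · simpa using PORightModule.rsmul_nonneg a.1 r (by simpa using ha.1) hr
    · simpa using PORightModule.rsmul_nonneg a.2 r (by simpa using ha.2) hr

section Defs

variable (R : Type*) [PORing R]

/-- The product `UX = a₁ξ₁ + ⋯ + aₙξₙ` of a row matrix `U = (a₁,…,aₙ)` with entries in `A`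
and a column matrix `X = (ξ₁,…,ξₙ)ᵗ` with entries in `R`. -/
def rowMul {A : Type*} [AddCommGroup A] [PartialOrder A] [PORightModule R A]
    {n : ℕ} (U : Fin n → A) (X : Fin n → R) : A :=
  ∑ i, rsmul (U i) (X i)

/-- A subset `S` of a partially ordered right `R`-module is a *finitely generated
`R⁺`-subsemimodule* if it is the set of all `R⁺`-linear combinations of some finite subset. -/
def IsFGConeIn {A : Type*} [AddCommGroup A] [PartialOrder A] [PORightModule R A]
    (S : Set A) : Prop :=
  ∃ (k : ℕ) (g : Fin k → A),
    S = { a | ∃ Y : Fin k → R, (∀ i, 0 ≤ Y i) ∧ a = rowMul R g Y }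

/-- `A` is *finitely related at* the row matrix `U ∈ M_{1,n}(A)` if the solution set of the
mixed system `UX ≥ 0, X ≥ 0` is a finitely generated `R⁺`-subsemimodule of `M_{n,1}(R)`. -/
def FinitelyRelatedAt {A : Type*} [AddCommGroup A] [PartialOrder A] [PORightModule R A]
    {n : ℕ} (U : Fin n → A) : Prop :=
  IsFGConeIn R {X : Fin n → R | 0 ≤ rowMul R U X ∧ ∀ i, 0 ≤ X i}

/-- `A` is *finitely po-presented at* the row matrix `U ∈ M_{1,n}(A)` if the solution set of
the system `UX ≥ 0` is a finitely generated `R⁺`-subsemimodule of `M_{n,1}(R)`. -/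
def FinitelyPoPresentedAt {A : Type*} [AddCommGroup A] [PartialOrder A] [PORightModule R A]
    {n : ℕ} (U : Fin n → A) : Prop :=
  IsFGConeIn R {X : Fin n → R | 0 ≤ rowMul R U X}

/-- A row matrix `U` is *spanning* if its entries generate `A` as a right `R`-module, i.e.
every element of `A` is an `R`-linear combination `UX` of the entries. -/
def SpanningRow {A : Type*} [AddCommGroup A] [PartialOrder A] [PORightModule R A]
    {n : ℕ} (U : Fin n → A) : Prop :=
  ∀ a : A, ∃ X : Fin n → R, a = rowMul R U X

variable (A : Type*) [AddCommGroup A] [PartialOrder A] [PORightModule R A]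

/-- `A` is *finitely po-presented* if it is finitely po-presented at some spanning row
matrix. -/
def FinitelyPoPresented : Prop :=
  ∃ (n : ℕ) (U : Fin n → A), SpanningRow R U ∧ FinitelyPoPresentedAt R U

/-- `A` is *finitely related* if it is a finitely generated right `R`-module and is finitely
related at every spanning row matrix. -/
def FinitelyRelatedMod : Prop :=
  (∃ (n : ℕ) (U : Fin n → A), SpanningRow R U) ∧
    ∀ (n : ℕ) (U : Fin n → A), SpanningRow R U → FinitelyRelatedAt R U

/-- `A` is *po-coherent* if it is finitely related at every row matrix of elements of `A`. -/
def PoCoherent : Prop :=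
  ∀ (n : ℕ) (U : Fin n → A), FinitelyRelatedAt R U

end Defs

/-- A po-ring is *right po-coherent* if it is po-coherent as a partially ordered right module
over itself. -/
def RightPoCoherent (R : Type*) [PORing R] : Prop :=
  PoCoherent R R

section Helpers

lemma sum_nonneg'' {A : Type*} [AddCommGroup A] [PartialOrder A]
    (hadd : ∀ a b : A, a ≤ b → ∀ c : A, a + c ≤ b + c)
    {ι : Type*} (s : Finset ι) (f : ι → A) (h : ∀ i ∈ s, 0 ≤ f i) :
    0 ≤ ∑ i ∈ s, f i := by
  classical
  induction s using Finset.induction_on with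
  | empty => simp
  | @insert j t hj ih =>
      rw [Finset.sum_insert hj]
      have h1 : (0:A) + 0 ≤ f j + 0 := hadd 0 (f j) (h j (Finset.mem_insert_self j t)) 0
      have h2 : (0:A) + f j ≤ (∑ i ∈ t, f i) + f j :=
        hadd 0 _ (ih fun i hi => h i (Finset.mem_insert_of_mem hi)) (f j)
      calc (0:A) = 0 + 0 := by rw [add_zero]
        _ ≤ f j + 0 := h1
        _ = 0 + f j := by rw [add_zero, zero_add]
        _ ≤ (∑ i ∈ t, f i) + f j := h2
        _ = f j + ∑ i ∈ t, f i := add_comm _ _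

variable {R : Type*} [PORing R] {A : Type*} [AddCommGroup A] [PartialOrder A]
  [PORightModule R A]

lemma rsmul_zero_right (a : A) : rsmul a (0 : R) = 0 := by
  have h : rsmul a ((0:R) + 0) = rsmul a (0:R) + rsmul a (0:R) := rsmul_add a 0 0
  rw [add_zero] at h
  exact add_left_cancel (by rw [← h, add_zero] :
    rsmul a (0:R) + rsmul a (0:R) = rsmul a (0:R) + 0)

lemma zero_rsmul (r : R) : rsmul (0 : A) r = 0 := by
  have h : rsmul ((0:A) + 0) r = rsmul (0:A) r + rsmul (0:A) r := add_rsmul 0 0 r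
  rw [add_zero] at h
  exact add_left_cancel (by rw [← h, add_zero] :
    rsmul (0:A) r + rsmul (0:A) r = rsmul (0:A) r + 0)

lemma rsmul_neg_right (a : A) (r : R) : rsmul a (-r) = -(rsmul a r) := by
  have h : rsmul a r + rsmul a (-r) = 0 := by
    rw [← rsmul_add, add_neg_cancel, rsmul_zero_right]
  exact (neg_eq_of_add_eq_zero_right h).symm

lemma rsmul_sub_right (a : A) (r s : R) : rsmul a (r - s) = rsmul a r - rsmul a s := by
  rw [sub_eq_add_neg, rsmul_add, rsmul_neg_right, sub_eq_add_neg]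

lemma sum_rsmul {ι : Type*} (s : Finset ι) (f : ι → A) (r : R) :
    rsmul (∑ i ∈ s, f i) r = ∑ i ∈ s, rsmul (f i) r := by
  classical
  induction s using Finset.induction_on with
  | empty => simp [zero_rsmul]
  | insert _ _ h ih => rw [Finset.sum_insert h, Finset.sum_insert h, add_rsmul, ih]

lemma rsmul_sum {ι : Type*} (s : Finset ι) (a : A) (f : ι → R) :
    rsmul a (∑ i ∈ s, f i) = ∑ i ∈ s, rsmul a (f i) := by
  classical
  induction s using Finset.induction_on with
  | empty => simp [rsmul_zero_right]
  | insert _ _ h ih => rw [Finset.sum_insert h, Finset.sum_insert h, rsmul_add, ih]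

variable (R)

lemma rowMul_sub_right {n : ℕ} (U : Fin n → A) (X Y : Fin n → R) :
    rowMul R U (X - Y) = rowMul R U X - rowMul R U Y := by
  unfold rowMul
  rw [← Finset.sum_sub_distrib]
  exact Finset.sum_congr rfl fun i _ => by
    simpa using rsmul_sub_right (U i) (X i) (Y i)

lemma rowMul_neg_right {n : ℕ} (U : Fin n → A) (X : Fin n → R) :
    rowMul R U (-X) = -(rowMul R U X) := by
  have := rowMul_sub_right R U 0 X
  simpa [rowMul, rsmul_zero_right] using this

lemma rowMul_single {n : ℕ} (U : Fin n → A) (j : Fin n) :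
    rowMul R U (Pi.single j (1 : R)) = U j := by
  classical
  unfold rowMul
  rw [Finset.sum_eq_single j]
  · simp [rsmul_one]
  · intro i _ hij
    rw [Pi.single_apply, if_neg hij, rsmul_zero_right]
  · simp

lemma rowMul_apply {n m : ℕ} (C : Fin m → (Fin n → R)) (Y : Fin m → R) (i : Fin n) :
    rowMul R C Y i = ∑ j, C j i * Y j := by
  unfold rowMul
  rw [Finset.sum_apply]
  rfl

lemma rowMul_rowMul {n m : ℕ} (W : Fin n → A) (C : Fin m → (Fin n → R)) (Y : Fin m → R) :
    rowMul R W (rowMul R C Y) = rowMul R (fun j => rowMul R W (C j)) Y := by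
  unfold rowMul
  calc ∑ i, rsmul (W i) ((∑ j, rsmul (C j) (Y j)) i)
      = ∑ i, ∑ j, rsmul (rsmul (W i) (C j i)) (Y j) := by
        refine Finset.sum_congr rfl fun i _ => ?_
        rw [Finset.sum_apply]
        rw [show (∑ j, rsmul (C j) (Y j) i) = ∑ j, C j i * Y j from rfl, rsmul_sum]
        exact Finset.sum_congr rfl fun j _ => by rw [rsmul_mul]
    _ = ∑ j, ∑ i, rsmul (rsmul (W i) (C j i)) (Y j) := Finset.sum_comm
    _ = ∑ j, rsmul (∑ i, rsmul (W i) (C j i)) (Y j) :=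
        Finset.sum_congr rfl fun j _ => (sum_rsmul _ _ _).symm

lemma rowMul_id {m : ℕ} (Y : Fin m → R) :
    rowMul R (fun j => (Pi.single j (1 : R) : Fin m → R)) Y = Y := by
  classical
  funext i
  rw [rowMul_apply]
  rw [Finset.sum_eq_single i]
  · simp
  · intro j _ hji
    rw [Pi.single_apply, if_neg (fun h => hji h.symm), zero_mul]
  · simp

lemma rowMul_nonneg {n : ℕ} (U : Fin n → A) (X : Fin n → R)
    (hU : ∀ i, 0 ≤ U i) (hX : ∀ i, 0 ≤ X i) : 0 ≤ rowMul R U X :=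
  sum_nonneg'' (PORightModule.add_le_add_right' R) _ _
    fun i _ => rsmul_nonneg (U i) (X i) (hU i) (hX i)

end Helpers

section MoreHelpers

variable {R : Type*} [PORing R] {A : Type*} [AddCommGroup A] [PartialOrder A]
  [PORightModule R A]

lemma neg_rsmul_left (a : A) (r : R) : rsmul (-a) r = -(rsmul a r) := by
  have h : rsmul a r + rsmul (-a) r = 0 := by
    rw [← add_rsmul, add_neg_cancel, zero_rsmul]
  exact (neg_eq_of_add_eq_zero_right h).symm

lemma sub_rsmul (a b : A) (r : R) : rsmul (a - b) r = rsmul a r - rsmul b r := by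
  rw [sub_eq_add_neg, add_rsmul, neg_rsmul_left, sub_eq_add_neg]

variable (R)

lemma rowMul_neg_entries {n : ℕ} (U : Fin n → A) (X : Fin n → R) :
    rowMul R (fun i => -(U i)) X = -(rowMul R U X) := by
  unfold rowMul
  rw [← Finset.sum_neg_distrib]
  exact Finset.sum_congr rfl fun i _ => neg_rsmul_left (U i) (X i)

lemma rowMul_sub_entries {n : ℕ} (U V : Fin n → A) (X : Fin n → R) :
    rowMul R (fun i => U i - V i) X = rowMul R U X - rowMul R V X := by
  unfold rowMul
  rw [← Finset.sum_sub_distrib]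
  exact Finset.sum_congr rfl fun i _ => sub_rsmul (U i) (V i) (X i)

lemma rowMul_addCases {p q : ℕ} (f : Fin p → A) (g : Fin q → A)
    (x : Fin p → R) (y : Fin q → R) :
    rowMul R (Fin.addCases f g) (Fin.addCases x y) = rowMul R f x + rowMul R g y := by
  unfold rowMul
  rw [Fin.sum_univ_add]
  simp only [Fin.addCases_left, Fin.addCases_right]

lemma single_nonneg' {p : ℕ} (l i : Fin p) : 0 ≤ (Pi.single l (1 : R) : Fin p → R) i := by
  rcases eq_or_ne i l with h | h
  · subst h; rw [Pi.single_eq_same]; exact PORing.zero_le_one'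
  · rw [Pi.single_eq_of_ne h]

end MoreHelpers


/-- Let `R` be a po-ring and `A` a finitely generated partially ordered right
`R`-module. Then `A` is finitely po-presented iff it is finitely po-presented at every
spanning row matrix of `A`. -/
theorem finitelyPoPresented_iff_at_every_spanning
    (R A : Type*) [PORing R] [AddCommGroup A] [PartialOrder A] [PORightModule R A]
    (hfg : ∃ (n : ℕ) (U : Fin n → A), SpanningRow R U) :
    FinitelyPoPresented R A ↔
      ∀ (n : ℕ) (U : Fin n → A), SpanningRow R U → FinitelyPoPresentedAt R U := by
  constructor
  · rintro ⟨n, U, hU, k, g, hg⟩ m V hV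
    -- express V in terms of U and U in terms of V
    choose C hC using fun j => hU (V j)
    choose D hD using fun i => hV (U i)
    have hVC : (fun j => rowMul R U (C j)) = V := funext fun j => (hC j).symm
    have hVD : (fun i => rowMul R V (D i)) = U := funext fun i => (hD i).symm
    -- each generator g l lies in the solution cone of U
    have hgl : ∀ l, 0 ≤ rowMul R U (g l) := by
      intro l
      have hmem : g l ∈ {a | ∃ Y : Fin k → R, (∀ i, 0 ≤ Y i) ∧ a = rowMul R g Y} :=
        ⟨Pi.single l 1, fun i => single_nonneg' R l i, (rowMul_single R g l).symm⟩
      rw [← hg] at hmem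
      exact hmem
    set w : Fin m → (Fin m → R) := fun j => Pi.single j (1 : R) - rowMul R D (C j) with hw
    have hVw : ∀ j, rowMul R V (w j) = 0 := by
      intro j
      have : rowMul R V (w j)
          = rowMul R V (Pi.single j (1 : R)) - rowMul R V (rowMul R D (C j)) := by
        rw [hw]
        exact rowMul_sub_right R V _ _
      rw [this, rowMul_single, rowMul_rowMul, hVD, ← hC j, sub_self]
    refine ⟨k + (m + m),
      Fin.addCases (fun l => rowMul R D (g l)) (Fin.addCases w (fun j => -(w j))), ?_⟩
    ext Y
    simp only [Set.mem_setOf_eq]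
    constructor
    · intro hY
      have hX : rowMul R C Y ∈ {X | 0 ≤ rowMul R U X} := by
        show 0 ≤ rowMul R U (rowMul R C Y)
        rw [rowMul_rowMul, hVC]
        exact hY
      rw [hg] at hX
      obtain ⟨lam, hlampos, hlam⟩ := hX
      choose α β hα hβ hαβ using fun j => PORing.directed' (Y j)
      refine ⟨Fin.addCases lam (Fin.addCases α β), ?_, ?_⟩
      · intro i
        induction i using Fin.addCases with
        | left l => simp only [Fin.addCases_left]; exact hlampos l
        | right j =>
            simp only [Fin.addCases_right]
            induction j using Fin.addCases with
            | left j' => simp only [Fin.addCases_left]; exact hα j'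
            | right j' => simp only [Fin.addCases_right]; exact hβ j'
      · rw [rowMul_addCases, rowMul_addCases, rowMul_neg_entries, ← sub_eq_add_neg,
          ← rowMul_sub_right]
        have hab : α - β = Y := funext fun j => by rw [Pi.sub_apply, ← hαβ j]
        rw [hab]
        have hwY : rowMul R w Y = Y - rowMul R (fun l => rowMul R D (g l)) lam := by
          have h1 : rowMul R w Y
              = rowMul R (fun j => (Pi.single j (1 : R) : Fin m → R)) Y
                - rowMul R (fun j => rowMul R D (C j)) Y := by
            rw [hw]
            exact rowMul_sub_entries R (fun j => (Pi.single j (1 : R) : Fin m → R))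
              (fun j => rowMul R D (C j)) Y
          rw [h1, rowMul_id, ← rowMul_rowMul, hlam, rowMul_rowMul]
        rw [hwY]
        abel
    · rintro ⟨lam, hlampos, rfl⟩
      rw [rowMul_rowMul]
      refine rowMul_nonneg R _ _ ?_ hlampos
      intro i
      induction i using Fin.addCases with
      | left l =>
          rw [Fin.addCases_left, rowMul_rowMul, hVD]
          exact hgl l
      | right j =>
          rw [Fin.addCases_right]
          induction j using Fin.addCases with
          | left j' => rw [Fin.addCases_left, hVw j']
          | right j' => rw [Fin.addCases_right, rowMul_neg_right, hVw j', neg_zero]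
  · intro h
    obtain ⟨n, U, hU⟩ := hfg
    exact ⟨n, U, hU, h n U hU⟩
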